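/- Let F be a finite field, a primitive, n = |F|−1, k < d ≤ n−1. Let g(x)=∏_{j=1}^{n−k}(x−a^j), f(x)=∏_{j=1}^{n−d}(x−a^j). Let G_k be the k×n matrix whose i-th row is the coefficient vector of x^{i−1} g(x), and B the (d−k)×n matrix whose i-th row is the coefficient vector of x^{i−1} f(x). Then the d×n matrix G obtained by stacking G_k on top of B has rank d over F. -/

import Mathlib

theorem stmt7 {F : Type*} [Field F] [Fintype F] (a : F) (n k d : ℕ)
    (hn : n = Fintype.card F - 1) (ha : IsPrimitiveRoot a n)
    (hkd : k < d) (hdn : d ≤ n - 1) :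
    let g := ∏ j ∈ Finset.Icc 1 (n - k), (Polynomial.X - Polynomial.C (a ^ j))
    let f := ∏ j ∈ Finset.Icc 1 (n - d), (Polynomial.X - Polynomial.C (a ^ j))
    let G : Matrix (Fin d) (Fin n) F := fun i j =>
      if (i : ℕ) < k then (Polynomial.X ^ (i : ℕ) * g).coeff j
      else (Polynomial.X ^ ((i : ℕ) - k) * f).coeff j
    G.rank = d := by
  intro g f G
  have hnd : d + 1 ≤ n := by omega
  -- monicity and degrees of g and f
  have hg : g.Monic := Polynomial.monic_prod_of_monic _ _ fun j _ => Polynomial.monic_X_sub_C _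
  have hf : f.Monic := Polynomial.monic_prod_of_monic _ _ fun j _ => Polynomial.monic_X_sub_C _
  have hgd : g.natDegree = n - k := by
    rw [Polynomial.natDegree_prod _ _ (fun j _ => Polynomial.X_sub_C_ne_zero _)]
    simp only [Polynomial.natDegree_X_sub_C, Finset.sum_const, smul_eq_mul, mul_one, Nat.card_Icc]; omega
  have hfd : f.natDegree = n - d := by
    rw [Polynomial.natDegree_prod _ _ (fun j _ => Polynomial.X_sub_C_ne_zero _)]
    simp only [Polynomial.natDegree_X_sub_C, Finset.sum_const, smul_eq_mul, mul_one, Nat.card_Icc]; omega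
  -- row polynomials and their degrees
  set P : Fin d → Polynomial F := fun i =>
    if (i : ℕ) < k then Polynomial.X ^ (i : ℕ) * g else Polynomial.X ^ ((i : ℕ) - k) * f with hP
  set deg : Fin d → ℕ := fun i =>
    if (i : ℕ) < k then n - k + (i : ℕ) else n - d + ((i : ℕ) - k) with hdeg
  have hGP : ∀ i j, G i j = (P i).coeff j := by
    intro i j
    simp only [G, P]
    split <;> rfl
  have hPmonic : ∀ i, (P i).Monic := by
    intro i
    simp only [P]
    split
    · exact (Polynomial.monic_X_pow _).mul hg
    · exact (Polynomial.monic_X_pow _).mul hf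
  have hPdeg : ∀ i, (P i).natDegree = deg i := by
    intro i
    simp only [P, deg]
    split
    · rw [Polynomial.natDegree_mul (pow_ne_zero _ Polynomial.X_ne_zero) hg.ne_zero,
        Polynomial.natDegree_X_pow, hgd]; omega
    · rw [Polynomial.natDegree_mul (pow_ne_zero _ Polynomial.X_ne_zero) hf.ne_zero,
        Polynomial.natDegree_X_pow, hfd]; omega
  have hdeglt : ∀ i, deg i < n := by
    intro i
    have := i.isLt
    simp only [deg]
    split <;> omega
  have hdeginj : Function.Injective deg := by
    intro i j hij
    have hi := i.isLt
    have hj := j.isLt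
    simp only [deg] at hij
    have : (i : ℕ) = (j : ℕ) := by
      split at hij <;> split at hij <;> omega
    exact Fin.ext this
  have hcoeff1 : ∀ i, (P i).coeff (deg i) = 1 := by
    intro i; rw [← hPdeg i]; exact (hPmonic i).coeff_natDegree
  have hcoeff0 : ∀ i j, deg i < j → (P i).coeff j = 0 := by
    intro i j hj
    exact Polynomial.coeff_eq_zero_of_natDegree_lt (by rw [hPdeg]; exact hj)
  -- linear independence of the rows
  have hli : LinearIndependent F G := by
    rw [linearIndependent_iff']
    intro s c hsum i hi
    have key : ∀ m : ℕ, ∀ i ∈ s, n - deg i ≤ m → c i = 0 := by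
      intro m
      induction m with
      | zero =>
        intro i hi h
        have := hdeglt i
        omega
      | succ m ih =>
        intro i hi h
        have h0 : ∑ j ∈ s, c j * G j ⟨deg i, hdeglt i⟩ = 0 := by
          have := congrFun hsum ⟨deg i, hdeglt i⟩
          simpa [G] using this
        rw [Finset.sum_eq_single_of_mem i hi ?_] at h0
        · rw [hGP, hcoeff1] at h0
          simpa using h0
        · intro j hj hji
          rcases lt_trichotomy (deg j) (deg i) with hlt | heq | hgt
          · rw [hGP, hcoeff0 j _ hlt, mul_zero]
          · exact absurd (hdeginj heq) hji
          · have hcj : c j = 0 := by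
              refine ih j hj ?_
              have := hdeglt j
              omega
            rw [hcj, zero_mul]
    exact key (n - deg i) i hi le_rfl
  exact hli.rank_matrix.trans (Fintype.card_fin d)
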